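/- The partial derivative with respect to ε of f(μ, ε) = Φ(μ/2 - ε/μ) - e^ε Φ(-μ/2 - ε/μ) equals -e^ε Φ(-μ/2 - ε/μ); in particular f is strictly decreasing in ε for every fixed μ > 0. -/

import Mathlib

noncomputable def stdNormalPDF (x : ℝ) : ℝ :=
  (Real.sqrt (2 * Real.pi))⁻¹ * Real.exp (-x ^ 2 / 2)

noncomputable def stdNormalCDF (x : ℝ) : ℝ := ∫ t in Set.Iic x, stdNormalPDF t

noncomputable def gaussF (μ ε : ℝ) : ℝ :=
  stdNormalCDF (μ / 2 - ε / μ) - Real.exp ε * stdNormalCDF (-μ / 2 - ε / μ)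

open MeasureTheory Set

lemma stdNormalPDF_eq (x : ℝ) :
    stdNormalPDF x = (Real.sqrt (2 * Real.pi))⁻¹ * Real.exp (-(1/2 : ℝ) * x ^ 2) := by
  unfold stdNormalPDF; ring_nf

lemma stdNormalPDF_integrable : Integrable stdNormalPDF := by
  have : Integrable (fun x : ℝ =>
      (Real.sqrt (2 * Real.pi))⁻¹ * Real.exp (-(1/2 : ℝ) * x ^ 2)) :=
    (integrable_exp_neg_mul_sq (by norm_num)).const_mul _
  exact this.congr (by filter_upwards with x using (stdNormalPDF_eq x).symm)

lemma stdNormalPDF_continuous : Continuous stdNormalPDF := by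
  unfold stdNormalPDF
  continuity

lemma stdNormalPDF_pos (x : ℝ) : 0 < stdNormalPDF x := by
  unfold stdNormalPDF
  positivity

lemma hasDerivAt_stdNormalCDF (x : ℝ) :
    HasDerivAt stdNormalCDF (stdNormalPDF x) x := by
  have hint : ∀ y : ℝ, IntegrableOn stdNormalPDF (Iic y) :=
    fun y => stdNormalPDF_integrable.integrableOn
  have heq : ∀ y : ℝ, stdNormalCDF y = stdNormalCDF 0 + ∫ t in (0:ℝ)..y, stdNormalPDF t := by
    intro y
    rw [← intervalIntegral.integral_Iic_sub_Iic (hint 0) (hint y)]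
    unfold stdNormalCDF; ring
  have hd : HasDerivAt (fun y => stdNormalCDF 0 + ∫ t in (0:ℝ)..y, stdNormalPDF t)
      (stdNormalPDF x) x := by
    have := intervalIntegral.integral_hasDerivAt_right
      (stdNormalPDF_integrable.intervalIntegrable (a:=0) (b:=x))
      (stdNormalPDF_continuous.stronglyMeasurableAtFilter _ _)
      (stdNormalPDF_continuous.continuousAt (x := x))
    exact this.const_add _
  exact hd.congr_of_eventuallyEq (by filter_upwards with y using heq y)

lemma stdNormalCDF_pos (x : ℝ) : 0 < stdNormalCDF x := by
  unfold stdNormalCDF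
  rw [setIntegral_pos_iff_support_of_nonneg_ae
      (by filter_upwards with t using (stdNormalPDF_pos t).le)
      stdNormalPDF_integrable.integrableOn]
  have : Function.support stdNormalPDF = univ := by
    ext t; simp [Function.mem_support, (stdNormalPDF_pos t).ne']
  rw [this, Set.univ_inter]
  simp [Real.volume_Iic]

lemma gauss_identity (μ ε : ℝ) (hμ : 0 < μ) :
    Real.exp ε * stdNormalPDF (μ / 2 + ε / μ) = stdNormalPDF (μ / 2 - ε / μ) := by
  unfold stdNormalPDF
  rw [mul_left_comm, ← Real.exp_add]
  congr 2
  field_simp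
  ring

lemma gaussF_hasDerivAt (μ : ℝ) (hμ : 0 < μ) (ε : ℝ) :
    HasDerivAt (fun e => gaussF μ e)
      (-(Real.exp ε * stdNormalCDF (-μ / 2 - ε / μ))) ε := by
  have h1 : HasDerivAt (fun e : ℝ => μ / 2 - e / μ) (-(1/μ)) ε := by
    simpa using ((hasDerivAt_id ε).div_const μ).const_sub (μ/2)
  have h2 : HasDerivAt (fun e : ℝ => -μ / 2 - e / μ) (-(1/μ)) ε := by
    simpa using ((hasDerivAt_id ε).div_const μ).const_sub (-μ/2)
  have hA : HasDerivAt (fun e => stdNormalCDF (μ / 2 - e / μ))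
      (stdNormalPDF (μ / 2 - ε / μ) * (-(1/μ))) ε :=
    (hasDerivAt_stdNormalCDF _).comp ε h1
  have hB : HasDerivAt (fun e => stdNormalCDF (-μ / 2 - e / μ))
      (stdNormalPDF (-μ / 2 - ε / μ) * (-(1/μ))) ε :=
    (hasDerivAt_stdNormalCDF _).comp ε h2
  have hE : HasDerivAt Real.exp (Real.exp ε) ε := Real.hasDerivAt_exp ε
  have hprod := hE.mul hB
  have hall := hA.sub hprod
  have key : stdNormalPDF (-μ / 2 - ε / μ) = stdNormalPDF (μ / 2 + ε / μ) := by
    unfold stdNormalPDF; ring_nf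
  convert hall using 1
  case e'_4 => rfl
  case e'_5 => rfl
  case e'_8 => rfl
  rw [key]
  have h := gauss_identity μ ε hμ
  linear_combination (-(1/μ)) * h

theorem gaussF_hasDerivAt_eps (μ : ℝ) (hμ : 0 < μ) (ε : ℝ) :
    HasDerivAt (fun e => gaussF μ e)
      (-(Real.exp ε * stdNormalCDF (-μ / 2 - ε / μ))) ε ∧
      StrictAnti (fun e => gaussF μ e) := by
  refine ⟨gaussF_hasDerivAt μ hμ ε, ?_⟩
  apply strictAnti_of_hasDerivAt_neg
    (f' := fun e => -(Real.exp e * stdNormalCDF (-μ / 2 - e / μ)))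
    (fun e => gaussF_hasDerivAt μ hμ e)
  intro e
  have := stdNormalCDF_pos (-μ / 2 - e / μ)
  have := Real.exp_pos e
  nlinarith
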